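/- Let 0 < η < 1/2 and π* > 1/(2(1−η)). Let S₁,…,S_J be independent random variables with 0 ≤ S_i ≤ ℓ_i and P(S_i ≤ (1−η)·π*·ℓ_i) ≤ A_i·exp(−β·η²·π*·ℓ_i) for constants A_i ≥ 0 and β > 0. Then for t = β·η²/(1−η), P(Σ_i S_i ≤ (1/2)·Σ_i ℓ_i) ≤ (Π_i (1 + A_i)) · exp(−β·η²·(π* − 1/(2(1−η)))·Σ_i ℓ_i). -/

import Mathlib

open MeasureTheory ProbabilityTheory Real Finset

theorem chernoff_phase_combination {Ω : Type*} [MeasurableSpace Ω]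
    (Pm : Measure Ω) [IsProbabilityMeasure Pm]
    {J : ℕ} (S : Fin J → Ω → ℝ) (hmeas : ∀ i, Measurable (S i))
    (hindep : iIndepFun S Pm)
    (ℓ : Fin J → ℝ)
    (hbound : ∀ i ω, 0 ≤ S i ω ∧ S i ω ≤ ℓ i)
    (η πs β : ℝ) (hη0 : 0 < η) (hη : η < 1 / 2)
    (hπ : 1 / (2 * (1 - η)) < πs) (hβ : 0 < β)
    (A : Fin J → ℝ) (hA : ∀ i, 0 ≤ A i)
    (htail : ∀ i, Pm {ω | S i ω ≤ (1 - η) * πs * ℓ i} ≤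
      ENNReal.ofReal (A i * Real.exp (-β * η ^ 2 * πs * ℓ i))) :
    Pm {ω | ∑ i, S i ω ≤ (1 / 2) * ∑ i, ℓ i} ≤
      ENNReal.ofReal ((∏ i, (1 + A i)) *
        Real.exp (-β * η ^ 2 * (πs - 1 / (2 * (1 - η))) * ∑ i, ℓ i)) := by
  have hη1 : 0 < 1 - η := by linarith
  set t : ℝ := -(β * η ^ 2 / (1 - η)) with ht_def
  have h1ne : (1 - η) ≠ 0 := hη1.ne'
  have ht : t ≤ 0 := neg_nonpos.mpr (by positivity)
  -- integrability of exp (t * sum) and each exp (t * S i)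
  have hexp_le_one : ∀ (X : Ω → ℝ), (∀ ω, 0 ≤ X ω) →
      ∀ ω, Real.exp (t * X ω) ≤ 1 := by
    intro X hX ω
    rw [Real.exp_le_one_iff]
    exact mul_nonpos_of_nonpos_of_nonneg ht (hX ω)
  have hint : ∀ (X : Ω → ℝ), Measurable X → (∀ ω, 0 ≤ X ω) →
      Integrable (fun ω => Real.exp (t * X ω)) Pm := by
    intro X hXm hX0
    refine Integrable.mono' (integrable_const (1 : ℝ))
      ((hXm.const_mul t).exp.aestronglyMeasurable) ?_
    filter_upwards with ω
    rw [Real.norm_eq_abs, abs_of_pos (Real.exp_pos _)]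
    exact hexp_le_one X hX0 ω
  have hsum_meas : Measurable (∑ i, S i) := by
    induction (Finset.univ : Finset (Fin J)) using Finset.induction_on with
    | empty => simp only [Finset.sum_empty]; exact measurable_const
    | insert _ _ h ih =>
      rw [Finset.sum_insert h]
      exact (hmeas _).add ih
  have hsum_nonneg : ∀ ω, 0 ≤ (∑ i, S i) ω := by
    intro ω
    rw [Finset.sum_apply]
    exact Finset.sum_nonneg fun i _ => (hbound i ω).1
  have hint_sum : Integrable (fun ω => Real.exp (t * (∑ i, S i) ω)) Pm :=
    hint _ hsum_meas hsum_nonneg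
  -- Chernoff step
  have hcher := measure_le_le_exp_mul_mgf ((1 / 2) * ∑ i, ℓ i) ht hint_sum
    (X := ∑ i, S i) (μ := Pm)
  rw [hindep.mgf_sum hmeas] at hcher
  have hset : {ω | (∑ i, S i) ω ≤ (1 / 2) * ∑ i, ℓ i}
      = {ω | ∑ i, S i ω ≤ (1 / 2) * ∑ i, ℓ i} := by
    ext ω; simp [Finset.sum_apply]
  rw [hset] at hcher
  -- per-phase mgf bound
  have hmgf : ∀ i, mgf (S i) Pm t ≤ (1 + A i) * Real.exp (-β * η ^ 2 * πs * ℓ i) := by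
    intro i
    set c : ℝ := (1 - η) * πs * ℓ i with hc
    have hEmeas : MeasurableSet {ω | S i ω ≤ c} := measurableSet_le (hmeas i) measurable_const
    have hstep : ∀ ω, Real.exp (t * S i ω) ≤
        Set.indicator {ω | S i ω ≤ c} (1 : Ω → ℝ) ω + Real.exp (t * c) := by
      intro ω
      by_cases hω : S i ω ≤ c
      · have hωm : ω ∈ {ω | S i ω ≤ c} := hω
        rw [Set.indicator_of_mem hωm]
        show Real.exp (t * S i ω) ≤ (1:ℝ) + Real.exp (t * c)
        have h0 : (0:ℝ) ≤ Real.exp (t * c) := (Real.exp_pos _).le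
        have h1 := hexp_le_one (S i) (fun ω => (hbound i ω).1) ω
        linarith
      · have hωm : ω ∉ {ω | S i ω ≤ c} := hω
        rw [Set.indicator_of_notMem hωm]
        push_neg at hω
        have : t * S i ω ≤ t * c := by
          rcases lt_or_eq_of_le ht with h | h
          · exact (mul_le_mul_left_of_neg h).mpr hω.le
          · simp [h]
        have := Real.exp_le_exp.mpr this
        show Real.exp (t * S i ω) ≤ (0:ℝ) + Real.exp (t * c)
        linarith
    have hind : Integrable (Set.indicator {ω | S i ω ≤ c} (1 : Ω → ℝ)) Pm :=
      (integrable_const (1:ℝ)).indicator hEmeas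
    have hintRHS : Integrable
        (fun ω => Set.indicator {ω | S i ω ≤ c} (1 : Ω → ℝ) ω + Real.exp (t * c)) Pm :=
      Integrable.add hind (integrable_const _)
    have hmono : mgf (S i) Pm t ≤
        ∫ ω, (Set.indicator {ω | S i ω ≤ c} (1 : Ω → ℝ) ω + Real.exp (t * c)) ∂Pm :=
      integral_mono (hint (S i) (hmeas i) (fun ω => (hbound i ω).1)) hintRHS hstep
    rw [integral_add hind (integrable_const _),
      integral_indicator_one hEmeas, integral_const, probReal_univ] at hmono
    have htc : t * c = -β * η ^ 2 * πs * ℓ i := by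
      rw [ht_def, hc]; field_simp
    have hPE : (Pm {ω | S i ω ≤ c}).toReal ≤ A i * Real.exp (-β * η ^ 2 * πs * ℓ i) := by
      exact ENNReal.toReal_le_of_le_ofReal
        (mul_nonneg (hA i) (Real.exp_pos _).le) (htail i)
    calc mgf (S i) Pm t ≤ (Pm {ω | S i ω ≤ c}).toReal + Real.exp (t * c) := by
          exact (by simpa using hmono : mgf (S i) Pm t ≤ Pm.real _ + _)
      _ ≤ A i * Real.exp (-β * η ^ 2 * πs * ℓ i) + Real.exp (-β * η ^ 2 * πs * ℓ i) := by
          rw [htc]; linarith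
      _ = (1 + A i) * Real.exp (-β * η ^ 2 * πs * ℓ i) := by ring
  -- combine
  have hprod : ∏ i, mgf (S i) Pm t ≤
      (∏ i, (1 + A i)) * Real.exp (-β * η ^ 2 * πs * ∑ i, ℓ i) := by
    calc ∏ i, mgf (S i) Pm t
        ≤ ∏ i, (1 + A i) * Real.exp (-β * η ^ 2 * πs * ℓ i) :=
          Finset.prod_le_prod (fun i _ => mgf_nonneg) (fun i _ => hmgf i)
      _ = (∏ i, (1 + A i)) * ∏ i, Real.exp (-β * η ^ 2 * πs * ℓ i) :=
          Finset.prod_mul_distrib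
      _ = (∏ i, (1 + A i)) * Real.exp (-β * η ^ 2 * πs * ∑ i, ℓ i) := by
          rw [← Real.exp_sum, ← Finset.mul_sum]
  have hfinal : (Pm {ω | ∑ i, S i ω ≤ (1 / 2) * ∑ i, ℓ i}).toReal ≤
      (∏ i, (1 + A i)) * Real.exp (-β * η ^ 2 * (πs - 1 / (2 * (1 - η))) * ∑ i, ℓ i) := by
    refine hcher.trans ?_
    have hprodA : 0 ≤ ∏ i, (1 + A i) :=
      Finset.prod_nonneg fun i _ => by have := hA i; linarith
    calc Real.exp (-t * ((1 / 2) * ∑ i, ℓ i)) * ∏ i, mgf (S i) Pm t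
        ≤ Real.exp (-t * ((1 / 2) * ∑ i, ℓ i)) *
          ((∏ i, (1 + A i)) * Real.exp (-β * η ^ 2 * πs * ∑ i, ℓ i)) := by
          have := Real.exp_pos (-t * ((1 / 2) * ∑ i, ℓ i))
          nlinarith [Finset.prod_nonneg (s := (Finset.univ : Finset (Fin J)))
            (f := fun i => mgf (S i) Pm t) (fun i _ => mgf_nonneg)]
      _ = (∏ i, (1 + A i)) * Real.exp (-β * η ^ 2 * (πs - 1 / (2 * (1 - η))) * ∑ i, ℓ i) := by
          have hexp_eq : Real.exp (-t * ((1 / 2) * ∑ i, ℓ i)) *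
              Real.exp (-β * η ^ 2 * πs * ∑ i, ℓ i) =
              Real.exp (-β * η ^ 2 * (πs - 1 / (2 * (1 - η))) * ∑ i, ℓ i) := by
            rw [← Real.exp_add]
            congr 1
            rw [ht_def]
            field_simp
            ring
          rw [← hexp_eq]
          ring
  refine le_trans ?_ (ENNReal.ofReal_le_ofReal hfinal)
  rw [ENNReal.ofReal_toReal (measure_ne_top _ _)]
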